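/- Fix N ∈ ℕ with N ≥ 2. The N-1 polynomials u_{k,N}(x₁,x₂) = T_N(x₁ cos α_k + x₂ sin α_k) - (-1)^k T_N(x₁ cos α_k - x₂ sin α_k), where α_k = πk/(2N) and k ranges over 1,…,N-1, are linearly independent in the space of real polynomials in two variables. -/

import Mathlib

open Polynomial Finset

lemma Tdeg : ∀ n : ℕ, ∀ i : ℕ, n < i → (Chebyshev.T ℝ (n : ℤ)).coeff i = 0 := by
  intro n
  induction n using Nat.strong_induction_on with
  | _ n ih =>
    match n with
    | 0 => intro i hi; simp only [Nat.cast_zero, Chebyshev.T_zero, coeff_one]; simp [show ¬ i = 0 by omega]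
    | 1 => intro i hi; simp [Chebyshev.T_one, coeff_X, show ¬ (1 = i) by omega]
    | (m+2) =>
      intro i hi
      have h2 : ((m:ℤ)+2) = ((m+2 : ℕ) : ℤ) := by push_cast; ring
      have hT := Chebyshev.T_add_two ℝ (m : ℤ)
      rw [h2] at hT
      rw [hT]
      obtain ⟨i', rfl⟩ : ∃ i', i = i' + 1 := ⟨i - 1, by omega⟩
      rw [coeff_sub, mul_assoc, coeff_ofNat_mul, coeff_X_mul]
      have c1 : ((m:ℤ)+1) = ((m+1 : ℕ) : ℤ) := by push_cast; ring
      rw [c1, ih (m+1) (by omega) i' (by omega), ih m (by omega) (i'+1) (by omega)]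
      ring

lemma Tsign : ∀ n j i : ℕ, n = i + 2*j → 0 < (-1:ℝ)^j * (Chebyshev.T ℝ (n:ℤ)).coeff i := by
  intro n
  induction n using Nat.strong_induction_on with
  | _ n ih =>
    match n with
    | 0 =>
      intro j i h
      obtain ⟨rfl, rfl⟩ : j = 0 ∧ i = 0 := by omega
      simp [Chebyshev.T_zero]
    | 1 =>
      intro j i h
      obtain ⟨rfl, rfl⟩ : j = 0 ∧ i = 1 := by omega
      simp [Chebyshev.T_one]
    | (m+2) =>
      intro j i h
      have h2 : ((m:ℤ)+2) = ((m+2 : ℕ) : ℤ) := by push_cast; ring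
      have c1 : ((m:ℤ)+1) = ((m+1 : ℕ) : ℤ) := by push_cast; ring
      have hT := Chebyshev.T_add_two ℝ (m : ℤ)
      rw [h2, c1] at hT
      rw [hT, coeff_sub, mul_assoc, coeff_ofNat_mul]
      match i with
      | 0 =>
        rw [mul_coeff_zero, coeff_X_zero, zero_mul, mul_zero]
        obtain ⟨j', rfl⟩ : ∃ j', j = j' + 1 := ⟨j - 1, by omega⟩
        have := ih m (by omega) j' 0 (by omega)
        have hp : (-1:ℝ)^(j'+1) = -(-1:ℝ)^j' := by ring
        rw [hp]
        nlinarith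
      | (i'+1) =>
        rw [coeff_X_mul]
        have ih1 := ih (m+1) (by omega) j i' (by omega)
        match j with
        | 0 =>
          rw [Tdeg m (i'+1) (by omega)]
          simp only [pow_zero, one_mul] at ih1 ⊢
          linarith
        | (j'+1) =>
          have ih2 := ih m (by omega) j' (i'+1) (by omega)
          have hp : (-1:ℝ)^(j'+1) = -(-1:ℝ)^j' := by ring
          rw [hp] at ih1 ⊢
          nlinarith


lemma coeff_comp_C_mul_X (q : ℝ[X]) (a : ℝ) (i : ℕ) :
    (q.comp (C a * X)).coeff i = q.coeff i * a ^ i := by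
  induction q using Polynomial.induction_on' with
  | add p r hp hr => simp [add_comp, coeff_add, hp, hr, add_mul]
  | monomial n t =>
    rw [monomial_comp, mul_pow, ← C_pow, ← mul_assoc, ← C_mul, coeff_C_mul, coeff_X_pow,
      coeff_monomial]
    split_ifs with h1 h2 h3
    · subst h2; ring
    · omega
    · omega
    · ring

lemma key {ι : Type*} [DecidableEq ι] (q : ℝ[X]) (D : ℕ)
    (hne : ∀ j, 2*j ≤ D → q.coeff (D - 2*j) ≠ 0)
    (S : Finset ι) (hS : S.card ≤ D/2 + 1) (c : ι → ℝ)
    (hpos : ∀ k ∈ S, 0 < c k) (hinj : Set.InjOn c S)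
    (b : ι → ℝ) (h : ∀ x : ℝ, ∑ k ∈ S, b k * q.eval (c k * x) = 0) :
    ∀ k ∈ S, b k = 0 := by
  intro l hl
  set m := S.card with hm
  have hm1 : 1 ≤ m := Finset.card_pos.mpr ⟨l, hl⟩
  have h2m : 2*(m-1) ≤ D := by
    have := Nat.div_mul_le_self D 2
    omega
  -- polynomial identity
  have hQ : (∑ k ∈ S, C (b k) * q.comp (C (c k) * X)) = 0 := by
    apply Polynomial.funext
    intro x
    simp only [eval_finset_sum, eval_mul, eval_C, eval_comp, eval_X, eval_zero]
    exact h x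
  have hco : ∀ i, (∑ k ∈ S, b k * c k ^ i) * q.coeff i = 0 := by
    intro i
    have := congrArg (fun p => Polynomial.coeff p i) hQ
    simp only [finset_sum_coeff, coeff_C_mul, coeff_comp_C_mul_X, coeff_zero] at this
    rw [Finset.sum_mul]
    rw [← this]
    apply Finset.sum_congr rfl
    intro k _
    ring
  have hpow : ∀ e ≤ m - 1, ∑ k ∈ S, (b k * c k ^ (D - 2*(m-1))) * (c k ^ 2)^e = 0 := by
    intro e he
    have hj : 2*(m-1-e) ≤ D := by omega
    have hi : D - 2*(m-1-e) = (D - 2*(m-1)) + 2*e := by omega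
    have := hco (D - 2*(m-1-e))
    rcases mul_eq_zero.mp this with h0 | h0
    · rw [← h0]
      apply Finset.sum_congr rfl
      intro k _
      rw [hi, pow_add, pow_mul]
      ring
    · exact absurd h0 (hne _ hj)
  -- Lagrange-style extraction
  set R : ℝ[X] := ∏ k ∈ S.erase l, (X - C (c k ^ 2)) with hR
  have hRdeg : R.natDegree = m - 1 := by
    rw [hR, natDegree_prod _ _ (fun k _ => X_sub_C_ne_zero (c k ^2))]
    simp only [natDegree_X_sub_C]
    simp [Finset.card_erase_of_mem hl, hm]
  have hsum : ∑ k ∈ S, (b k * c k ^ (D - 2*(m-1))) * R.eval (c k ^ 2) = 0 := by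
    have : ∀ k ∈ S, (b k * c k ^ (D - 2*(m-1))) * R.eval (c k ^ 2)
        = ∑ e ∈ Finset.range m, R.coeff e * ((b k * c k ^ (D - 2*(m-1))) * (c k ^ 2)^e) := by
      intro k _
      rw [eval_eq_sum_range' (by omega : R.natDegree < m), Finset.mul_sum]
      apply Finset.sum_congr rfl
      intro e _
      ring
    rw [Finset.sum_congr rfl this, Finset.sum_comm]
    apply Finset.sum_eq_zero
    intro e he
    rw [← Finset.mul_sum, hpow e (by simp at he; omega), mul_zero]
  have hzero : ∀ k ∈ S, k ≠ l → (b k * c k ^ (D - 2*(m-1))) * R.eval (c k ^ 2) = 0 := by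
    intro k hk hkl
    have : R.eval (c k ^ 2) = 0 := by
      rw [hR, eval_prod]
      apply Finset.prod_eq_zero (Finset.mem_erase.mpr ⟨hkl, hk⟩)
      simp
    rw [this, mul_zero]
  rw [Finset.sum_eq_single_of_mem l hl hzero] at hsum
  have hRl : R.eval (c l ^ 2) ≠ 0 := by
    rw [hR, eval_prod]
    apply Finset.prod_ne_zero_iff.mpr
    intro k hk
    simp only [eval_sub, eval_X, eval_C]
    have hkl : k ≠ l := (Finset.mem_erase.mp hk).1
    have hkS : k ∈ S := (Finset.mem_erase.mp hk).2
    have hne' : c k ≠ c l := fun hcc => hkl (hinj hkS hl hcc)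
    have := hpos k hkS; have := hpos l hl
    intro hcon
    apply hne'
    nlinarith [sub_eq_zero.mp hcon]
  have hcl : (0:ℝ) < c l ^ (D - 2*(m-1)) := pow_pos (hpos l hl) _
  have := mul_eq_zero.mp hsum
  rcases this with h0 | h0
  · rcases mul_eq_zero.mp h0 with h1 | h1
    · exact h1
    · exact absurd h1 (by positivity)
  · exact absurd h0 hRl


theorem chebyshev_eigenfunctions_linearly_independent (N : ℕ) (hN : 2 ≤ N) :
    LinearIndependent ℝ (fun j : Fin (N - 1) => fun x : ℝ × ℝ =>
      (Chebyshev.T ℝ (N : ℤ)).eval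
          (x.1 * Real.cos (Real.pi * (j.val + 1) / (2 * N))
            + x.2 * Real.sin (Real.pi * (j.val + 1) / (2 * N)))
        - (-1 : ℝ) ^ (j.val + 1) * (Chebyshev.T ℝ (N : ℤ)).eval
          (x.1 * Real.cos (Real.pi * (j.val + 1) / (2 * N))
            - x.2 * Real.sin (Real.pi * (j.val + 1) / (2 * N)))) := by
  rw [Fintype.linearIndependent_iff]
  intro g hg j
  set p : ℝ[X] := Chebyshev.T ℝ (N : ℤ) with hp
  set c : Fin (N-1) → ℝ := fun k => Real.cos (Real.pi * (k.val + 1) / (2 * N)) with hcdef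
  set s : Fin (N-1) → ℝ := fun k => Real.sin (Real.pi * (k.val + 1) / (2 * N)) with hsdef
  have hNpos : (0:ℝ) < N := by positivity
  have hang : ∀ k : Fin (N-1), 0 < Real.pi * (k.val + 1) / (2 * N) ∧
      Real.pi * (k.val + 1) / (2 * N) < Real.pi / 2 := by
    intro k
    constructor
    · positivity
    · rw [div_lt_div_iff₀ (by positivity) (by norm_num)]
      have hk2 : k.val + 1 < N := by have := k.isLt; omega
      have hk : (k.val : ℝ) + 1 < N := by exact_mod_cast hk2
      nlinarith [Real.pi_pos]
  have hc_pos : ∀ k, 0 < c k := fun k =>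
    Real.cos_pos_of_mem_Ioo ⟨by linarith [(hang k).1, Real.pi_pos], (hang k).2⟩
  have hs_pos : ∀ k, 0 < s k := fun k =>
    Real.sin_pos_of_pos_of_lt_pi (hang k).1 (by linarith [(hang k).2, Real.pi_pos])
  have hc_inj : Set.InjOn c (Set.univ : Set (Fin (N-1))) := by
    intro a _ b _ hab
    have h1 := hang a; have h2 := hang b
    have := Real.injOn_cos
      ⟨le_of_lt h1.1, by linarith [Real.pi_pos, h1.2]⟩
      ⟨le_of_lt h2.1, by linarith [Real.pi_pos, h2.2]⟩ hab
    have hval : (a.val : ℝ) = b.val := by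
      field_simp at this
      linarith
    ext
    exact_mod_cast hval
  -- pointwise form of the relation
  have hgpt : ∀ x t : ℝ, ∑ k : Fin (N-1), g k *
      (p.eval (x * c k + t * s k) - (-1:ℝ)^(k.val+1) * p.eval (x * c k - t * s k)) = 0 := by
    intro x t
    have := congrFun hg (x, t)
    simpa [Finset.sum_apply, Pi.smul_apply, smul_eq_mul] using this
  -- coefficient facts
  have hne_p : ∀ j, 2*j ≤ N → p.coeff (N - 2*j) ≠ 0 := by
    intro j hj h0
    have := Tsign N j (N - 2*j) (by omega)
    rw [← hp, h0, mul_zero] at this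
    exact lt_irrefl 0 this
  have hne_p' : ∀ j, 2*j ≤ N-1 → (derivative p).coeff (N-1 - 2*j) ≠ 0 := by
    intro j hj
    rw [coeff_derivative]
    have h1 : N-1-2*j+1 = N - 2*j := by omega
    rw [h1]
    apply mul_ne_zero (hne_p j (by omega))
    positivity
  -- odd part
  have godd : ∀ k : Fin (N-1), (k.val+1) % 2 = 1 → g k = 0 := by
    set S1 : Finset (Fin (N-1)) := Finset.univ.filter (fun k => (k.val+1) % 2 = 1) with hS1
    have hcard : S1.card ≤ N/2 + 1 := by
      have := Finset.card_le_card_of_injOn (fun k : Fin (N-1) => (k.val+1)/2)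
        (s := S1) (t := Finset.range (N/2+1))
        (fun a ha => by
          simp only [Finset.mem_coe, Finset.mem_range]
          have := a.isLt
          omega)
        (fun a ha b hb hab => by
          have ha' : (a.val+1) % 2 = 1 := by
            have := ha; simp only [hS1, Finset.coe_filter, Set.mem_setOf_eq] at this
            exact this.2
          have hb' : (b.val+1) % 2 = 1 := by
            have := hb; simp only [hS1, Finset.coe_filter, Set.mem_setOf_eq] at this
            exact this.2
          have hab' : (a.val+1)/2 = (b.val+1)/2 := hab
          have : a.val = b.val := by omega
          exact Fin.ext this)
      simpa using this
    have hmain := key p N hne_p S1 hcard c (fun k _ => hc_pos k)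
      (Set.InjOn.mono (Set.subset_univ _) hc_inj)
      (fun k => g k * (1 - (-1:ℝ)^(k.val+1)))
      (by
        intro x
        have h0 := hgpt x 0
        simp only [zero_mul, add_zero, sub_zero] at h0
        rw [← h0]
        rw [Finset.sum_filter]
        apply Finset.sum_congr rfl
        intro k _
        by_cases hpar : (k.val + 1) % 2 = 1
        · simp only [hpar, if_true]
          have : (-1:ℝ)^(k.val+1) = -1 := Odd.neg_one_pow (Nat.odd_iff.mpr (by omega))
          rw [this, mul_comm (c k) x]
          ring
        · simp only [hpar, if_false]
          have : (-1:ℝ)^(k.val+1) = 1 := Even.neg_one_pow (Nat.even_iff.mpr (by omega))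
          rw [this]
          ring)
    intro k hk
    have := hmain k (by simp [hS1, hk])
    have hodd : (-1:ℝ)^(k.val+1) = -1 := Odd.neg_one_pow (Nat.odd_iff.mpr (by omega))
    simp only [hodd] at this
    norm_num at this
    exact this
  -- even part
  have geven : ∀ k : Fin (N-1), (k.val+1) % 2 = 0 → g k = 0 := by
    set S2 : Finset (Fin (N-1)) := Finset.univ.filter (fun k => (k.val+1) % 2 = 0) with hS2
    have hcard : S2.card ≤ (N-1)/2 + 1 := by
      have := Finset.card_le_card_of_injOn (fun k : Fin (N-1) => (k.val+1)/2)
        (s := S2) (t := Finset.range ((N-1)/2+1))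
        (fun a ha => by
          simp only [Finset.mem_coe, Finset.mem_range]
          have := a.isLt
          omega)
        (fun a ha b hb hab => by
          have ha' : (a.val+1) % 2 = 0 := by
            have := ha; simp only [hS2, Finset.coe_filter, Set.mem_setOf_eq] at this
            exact this.2
          have hb' : (b.val+1) % 2 = 0 := by
            have := hb; simp only [hS2, Finset.coe_filter, Set.mem_setOf_eq] at this
            exact this.2
          have hab' : (a.val+1)/2 = (b.val+1)/2 := hab
          have : a.val = b.val := by omega
          exact Fin.ext this)
      simpa using this
    have hder : ∀ x : ℝ, ∑ k : Fin (N-1), g k * ((derivative p).eval (x * c k) * s k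
        + (-1:ℝ)^(k.val+1) * ((derivative p).eval (x * c k) * s k)) = 0 := by
      intro x
      have hD : ∀ k : Fin (N-1), HasDerivAt (fun t : ℝ =>
          g k * (p.eval (x * c k + t * s k) - (-1:ℝ)^(k.val+1) * p.eval (x * c k - t * s k)))
          (g k * ((derivative p).eval (x * c k) * s k
            + (-1:ℝ)^(k.val+1) * ((derivative p).eval (x * c k) * s k))) 0 := by
        intro k
        have d1 : HasDerivAt (fun t : ℝ => x * c k + t * s k) (s k) 0 := by
          simpa using ((hasDerivAt_id (0:ℝ)).mul_const (s k)).const_add (x * c k)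
        have d2 : HasDerivAt (fun t : ℝ => x * c k - t * s k) (-(s k)) 0 := by
          simpa using (hasDerivAt_const (0:ℝ) (x * c k)).fun_sub
            ((hasDerivAt_id (0:ℝ)).mul_const (s k))
        have e1 : HasDerivAt (fun t : ℝ => p.eval (x * c k + t * s k))
            ((derivative p).eval (x * c k) * s k) 0 := by
          have := (p.hasDerivAt (x * c k + 0 * s k)).comp 0 d1
          simpa [Function.comp_def] using this
        have e2 : HasDerivAt (fun t : ℝ => p.eval (x * c k - t * s k))
            ((derivative p).eval (x * c k) * (-(s k))) 0 := by
          have := (p.hasDerivAt (x * c k - 0 * s k)).comp 0 d2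
          simpa [Function.comp_def] using this
        have := (e1.fun_sub (e2.const_mul ((-1:ℝ)^(k.val+1)))).const_mul (g k)
        exact this.congr_deriv (by ring)
      have Hsum := HasDerivAt.fun_sum (u := Finset.univ) (fun k _ => hD k)
      have hfun : (fun t : ℝ => ∑ k : Fin (N-1), g k *
          (p.eval (x * c k + t * s k) - (-1:ℝ)^(k.val+1) * p.eval (x * c k - t * s k)))
          = fun _ => (0:ℝ) := funext (fun t => hgpt x t)
      rw [hfun] at Hsum
      exact Hsum.unique (hasDerivAt_const 0 0)
    have hmain := key (derivative p) (N-1) hne_p' S2 hcard c (fun k _ => hc_pos k)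
      (Set.InjOn.mono (Set.subset_univ _) hc_inj)
      (fun k => g k * (s k * (1 + (-1:ℝ)^(k.val+1))))
      (by
        intro x
        have h0 := hder x
        rw [← h0, Finset.sum_filter]
        apply Finset.sum_congr rfl
        intro k _
        by_cases hpar : (k.val + 1) % 2 = 0
        · simp only [hpar, if_true]
          rw [mul_comm (c k) x]
          ring
        · simp only [hpar, if_false]
          have : (-1:ℝ)^(k.val+1) = -1 := Odd.neg_one_pow (Nat.odd_iff.mpr (by omega))
          rw [this]
          ring)
    intro k hk
    have := hmain k (by simp [hS2, hk])
    have heven : (-1:ℝ)^(k.val+1) = 1 := Even.neg_one_pow (Nat.even_iff.mpr (by omega))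
    simp only [heven] at this
    have := mul_eq_zero.mp this
    rcases this with h | h
    · exact h
    · norm_num at h
      exact absurd h (hs_pos k).ne'
  rcases Nat.even_or_odd (j.val + 1) with h | h
  · exact geven j (Nat.even_iff.mp h)
  · exact godd j (Nat.odd_iff.mp h)
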